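/- (Induction claim for IHTC) Let Ψ ∈ ℝ^{n×p} have unit-norm columns with mutual coherence μ satisfying μ·s < 1/2, where x† ∈ ℝ^p has support A† with |A†| = s ≥ 1, and y = Ψ x† + η with ‖η‖₂ ≤ ε. Let C₀ > 1/(2(1 − 2μs)²), α = (1 − 1/√(2C₀))/(μs), γ ∈ [(2μs/(1 − 1/√(2C₀)))², 1), K ≥ 1 an integer, and λ* = C₀ ε². Define λ_ℓ = γ^ℓ λ₀ for ℓ ≥ 0, and define x(λ₀) = 0 and, for ℓ ≥ 1, x(λ_ℓ) as the result of K iterations of the map z ↦ H_{λ_ℓ}(z + Ψᵗ(y − Ψ z)) starting from x(λ_{ℓ−1}). If λ₀ is large enough that ‖x†‖_{ℓ∞} ≤ α √(2γλ₀), then for every ℓ ≥ 0 with λ_ℓ ≥ λ*, one has supp(x(λ_ℓ)) ⊂ A† and ‖x(λ_ℓ) − x†‖_{ℓ∞} ≤ α √(2γλ_ℓ). -/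

import Mathlib

open Finset Matrix

/-- The hard-thresholding operator `H_λ(t) = t` if `|t| > √(2λ)`, else `0`. -/
noncomputable def hardThresh (lam t : ℝ) : ℝ :=
  if Real.sqrt (2 * lam) < |t| then t else 0

lemma grad_key {n p : ℕ} (Ψ : Matrix (Fin n) (Fin p) ℝ)
    (xdag : Fin p → ℝ) (η : Fin n → ℝ)
    (hcol : ∀ i, ∑ k, Ψ k i ^ 2 = 1)
    (z : Fin p → ℝ) (i : Fin p) :
    z i + Ψ.transpose.mulVec ((Ψ.mulVec xdag + η) - Ψ.mulVec z) i - xdag i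
      = (∑ j ∈ Finset.univ.erase i, (∑ k, Ψ k i * Ψ k j) * (xdag j - z j))
        + ∑ k, Ψ k i * η k := by
  have h1 : Ψ.transpose.mulVec ((Ψ.mulVec xdag + η) - Ψ.mulVec z) i
      = ∑ j, (∑ k, Ψ k i * Ψ k j) * (xdag j - z j) + ∑ k, Ψ k i * η k := by
    simp only [Matrix.mulVec, Matrix.transpose_apply, dotProduct, Pi.add_apply, Pi.sub_apply]
    have h2 : ∀ k, Ψ k i * (∑ j, Ψ k j * xdag j + η k - ∑ j, Ψ k j * z j)
        = (∑ j, Ψ k i * (Ψ k j * (xdag j - z j))) + Ψ k i * η k := by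
      intro k
      simp only [mul_sub, Finset.sum_sub_distrib, ← Finset.mul_sum]
      ring
    rw [Finset.sum_congr rfl fun k _ => h2 k, Finset.sum_add_distrib]
    congr 1
    rw [Finset.sum_comm]
    exact Finset.sum_congr rfl fun j _ => by
      rw [Finset.sum_mul]
      exact Finset.sum_congr rfl fun k _ => (mul_assoc _ _ _).symm
  rw [h1, ← Finset.sum_erase_add _ _ (Finset.mem_univ i)]
  have h3 : (∑ k, Ψ k i * Ψ k i) = 1 := by
    rw [← hcol i]; exact Finset.sum_congr rfl fun k _ => (sq (Ψ k i)).symm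
  rw [h3]
  ring

lemma grad_bound {n p : ℕ} (Ψ : Matrix (Fin n) (Fin p) ℝ)
    (μ ε : ℝ) (s : ℕ) (xdag : Fin p → ℝ) (η : Fin n → ℝ) (Adag : Finset (Fin p))
    (hcol : ∀ i, ∑ k, Ψ k i ^ 2 = 1)
    (hcoh : ∀ i j, i ≠ j → |∑ k, Ψ k i * Ψ k j| ≤ μ) (hμpos : 0 < μ)
    (hsupp : Function.support xdag ⊆ (Adag : Set (Fin p)))
    (hcard : Adag.card = s)
    (hη : Real.sqrt (∑ k, η k ^ 2) ≤ ε)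
    (β : ℝ) (z : Fin p → ℝ)
    (hz : Function.support z ⊆ (Adag : Set (Fin p)))
    (hβ : ∀ j, |z j - xdag j| ≤ β) (i : Fin p) :
    |z i + Ψ.transpose.mulVec ((Ψ.mulVec xdag + η) - Ψ.mulVec z) i - xdag i|
      ≤ μ * s * β + ε := by
  have hβ0 : 0 ≤ β := le_trans (abs_nonneg _) (hβ i)
  have hε0 : 0 ≤ ε := le_trans (Real.sqrt_nonneg _) hη
  rw [grad_key Ψ xdag η hcol z i]
  refine le_trans (abs_add_le _ _) (add_le_add ?_ ?_)
  · have hd : ∀ j, j ∉ Adag → xdag j - z j = 0 := by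
      intro j hj
      have h1 : xdag j = 0 := by
        by_contra h; exact hj (by exact_mod_cast hsupp h)
      have h2 : z j = 0 := by
        by_contra h; exact hj (by exact_mod_cast hz h)
      rw [h1, h2, sub_zero]
    calc |∑ j ∈ Finset.univ.erase i, (∑ k, Ψ k i * Ψ k j) * (xdag j - z j)|
        ≤ ∑ j ∈ Finset.univ.erase i, |(∑ k, Ψ k i * Ψ k j) * (xdag j - z j)| :=
          Finset.abs_sum_le_sum_abs _ _
      _ = ∑ j ∈ Adag.erase i, |(∑ k, Ψ k i * Ψ k j) * (xdag j - z j)| := by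
          refine (Finset.sum_subset (Finset.erase_subset_erase i (Finset.subset_univ _))
            fun j hji hj => ?_).symm
          have hjne : j ≠ i := (Finset.mem_erase.mp hji).1
          have hjA : j ∉ Adag := fun h => hj (Finset.mem_erase.mpr ⟨hjne, h⟩)
          rw [hd j hjA, mul_zero, abs_zero]
      _ ≤ ∑ j ∈ Adag.erase i, μ * β := by
          refine Finset.sum_le_sum fun j hj => ?_
          rw [abs_mul]
          exact mul_le_mul (hcoh i j (Ne.symm (Finset.mem_erase.mp hj).1))
            (by rw [abs_sub_comm]; exact hβ j) (abs_nonneg _) hμpos.le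
      _ = (Adag.erase i).card * (μ * β) := by rw [Finset.sum_const, nsmul_eq_mul]
      _ ≤ s * (μ * β) := by
          have := Finset.card_erase_le (s := Adag) (a := i)
          rw [hcard] at this
          exact mul_le_mul_of_nonneg_right (by exact_mod_cast this) (by positivity)
      _ = μ * s * β := by ring
  · have hcs := Finset.sum_mul_sq_le_sq_mul_sq Finset.univ (fun k => Ψ k i) η
    rw [hcol i] at hcs
    have hη2 : (∑ k, η k ^ 2) ≤ ε ^ 2 := by
      nlinarith [Real.sq_sqrt (show (0:ℝ) ≤ ∑ k, η k ^ 2 by positivity),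
        Real.sqrt_nonneg (∑ k, η k ^ 2)]
    nlinarith [abs_nonneg (∑ k, Ψ k i * η k), sq_abs (∑ k, Ψ k i * η k)]

theorem ihtc_induction_claim {n p : ℕ} (Ψ : Matrix (Fin n) (Fin p) ℝ)
    (μ ε C₀ α γ lam₀ : ℝ) (s K : ℕ)
    (xdag : Fin p → ℝ) (η y : Fin n → ℝ) (Adag : Finset (Fin p))
    (hcol : ∀ i, ∑ k, Ψ k i ^ 2 = 1)
    (hcoh : ∀ i j, i ≠ j → |∑ k, Ψ k i * Ψ k j| ≤ μ) (hμpos : 0 < μ)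
    (hsuppdag : Function.support xdag = (Adag : Set (Fin p)))
    (hcard : Adag.card = s) (hs : 1 ≤ s) (hμs : μ * s < 1 / 2)
    (hy : y = Ψ.mulVec xdag + η)
    (hη : Real.sqrt (∑ k, η k ^ 2) ≤ ε)
    (hC : 1 / (2 * (1 - 2 * μ * s) ^ 2) < C₀)
    (hα : α = (1 - 1 / Real.sqrt (2 * C₀)) / (μ * s))
    (hγ : γ ∈ Set.Ico ((2 * μ * s / (1 - 1 / Real.sqrt (2 * C₀))) ^ 2) 1)
    (hK : 1 ≤ K)
    (xseq : ℕ → Fin p → ℝ)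
    (hx0 : xseq 0 = 0)
    (hxstep : ∀ ℓ : ℕ, xseq (ℓ + 1) =
      (fun z : Fin p → ℝ => fun i =>
          hardThresh (γ ^ (ℓ + 1) * lam₀)
            (z i + Ψ.transpose.mulVec (y - Ψ.mulVec z) i))^[K] (xseq ℓ))
    (hlam₀ : ‖xdag‖ ≤ α * Real.sqrt (2 * γ * lam₀)) :
    ∀ ℓ : ℕ, C₀ * ε ^ 2 ≤ γ ^ ℓ * lam₀ →
      Function.support (xseq ℓ) ⊆ (Adag : Set (Fin p)) ∧
      ‖xseq ℓ - xdag‖ ≤ α * Real.sqrt (2 * γ * (γ ^ ℓ * lam₀)) := by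
  subst hy
  -- basic constants
  have hspos : (0:ℝ) < s := by exact_mod_cast hs
  have hμs0 : 0 < μ * s := mul_pos hμpos hspos
  have h2μs : 0 < 1 - 2*(μ*s) := by linarith
  have hC₀half : 1/2 < C₀ := by
    refine lt_of_le_of_lt ?_ hC
    rw [div_le_div_iff₀ (by norm_num) (by nlinarith : (0:ℝ) < 2*(1-2*μ*(s:ℝ))^2)]
    nlinarith
  have hC₀pos : 0 < C₀ := by linarith
  have h2C₀ : 1 < 2*C₀ := by linarith
  have hsq1 : 1 < Real.sqrt (2*C₀) := by
    rw [show (1:ℝ) = Real.sqrt 1 by simp]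
    exact Real.sqrt_lt_sqrt (by norm_num) h2C₀
  have hsqpos : 0 < Real.sqrt (2*C₀) := by linarith
  have hδpos : 0 < 1 - 1/Real.sqrt (2*C₀) := by
    have : 1/Real.sqrt (2*C₀) < 1 := by rw [div_lt_one hsqpos]; exact hsq1
    linarith
  have hαpos : 0 < α := by rw [hα]; positivity
  have hμsα : μ * s * α = 1 - 1/Real.sqrt (2*C₀) := by
    rw [hα]; field_simp
  have hγ0 : 0 < γ := lt_of_lt_of_le (by positivity) hγ.1
  have hγlt : γ < 1 := hγ.2
  have hαγ : 2 ≤ α * Real.sqrt γ := by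
    have hid : 2*μ*s/(1 - 1/Real.sqrt (2*C₀)) = 2/α := by
      rw [hα]; field_simp
    have h1 : (2/α)^2 ≤ γ := by rw [← hid]; exact hγ.1
    have h2 : 2/α ≤ Real.sqrt γ := by
      have := Real.sqrt_le_sqrt h1
      rwa [Real.sqrt_sq (by positivity)] at this
    calc (2:ℝ) = α * (2/α) := by field_simp
      _ ≤ α * Real.sqrt γ := by nlinarith
  have hε0 : 0 ≤ ε := le_trans (Real.sqrt_nonneg _) hη
  have hsupp' : Function.support xdag ⊆ (Adag : Set (Fin p)) := hsuppdag.le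
  -- single step lemma
  have step : ∀ lam : ℝ, C₀ * ε ^ 2 ≤ lam → ∀ z : Fin p → ℝ,
      Function.support z ⊆ (Adag : Set (Fin p)) →
      (∀ j, |z j - xdag j| ≤ α * Real.sqrt (2*lam)) →
      Function.support (fun i => hardThresh lam
        (z i + Ψ.transpose.mulVec ((Ψ.mulVec xdag + η) - Ψ.mulVec z) i)) ⊆ (Adag : Set (Fin p)) ∧
      ∀ j, |hardThresh lam
        (z j + Ψ.transpose.mulVec ((Ψ.mulVec xdag + η) - Ψ.mulVec z) j) - xdag j|
          ≤ α * Real.sqrt (2*γ*lam) := by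
    intro lam hlam z hz hb
    have hlam0 : 0 ≤ lam := le_trans (by positivity) hlam
    have hsplit : Real.sqrt (2*γ*lam) = Real.sqrt γ * Real.sqrt (2*lam) := by
      rw [show 2*γ*lam = γ*(2*lam) by ring, Real.sqrt_mul hγ0.le]
    have hεlam : ε ≤ (1/Real.sqrt (2*C₀)) * Real.sqrt (2*lam) := by
      have h1 : ε^2 ≤ 2*lam/(2*C₀) := by
        rw [le_div_iff₀ (by linarith)]
        calc ε^2*(2*C₀) = 2*(C₀*ε^2) := by ring
          _ ≤ 2*lam := by linarith
      have ha : 0 ≤ (1/Real.sqrt (2*C₀)) * Real.sqrt (2*lam) := by positivity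
      have hsq : ((1/Real.sqrt (2*C₀)) * Real.sqrt (2*lam))^2 = 2*lam/(2*C₀) := by
        rw [mul_pow, div_pow, one_pow, Real.sq_sqrt (by linarith : (0:ℝ) ≤ 2*C₀),
          Real.sq_sqrt (by linarith : (0:ℝ) ≤ 2*lam)]
        ring
      have h2 : ε^2 ≤ ((1/Real.sqrt (2*C₀)) * Real.sqrt (2*lam))^2 := by
        rw [hsq]; exact h1
      have h3 := Real.sqrt_le_sqrt h2
      rwa [Real.sqrt_sq hε0, Real.sqrt_sq ha] at h3
    have hub : ∀ i, |z i + Ψ.transpose.mulVec ((Ψ.mulVec xdag + η) - Ψ.mulVec z) i - xdag i|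
        ≤ Real.sqrt (2*lam) := by
      intro i
      refine le_trans (grad_bound Ψ μ ε s xdag η Adag hcol hcoh hμpos hsupp' hcard hη
        (α * Real.sqrt (2*lam)) z hz hb i) ?_
      have he : μ * s * (α * Real.sqrt (2*lam))
          = (1 - 1/Real.sqrt (2*C₀)) * Real.sqrt (2*lam) := by
        rw [← hμsα]; ring
      rw [he]
      linarith [hεlam]
    have h2le : 2 * Real.sqrt (2*lam) ≤ α * Real.sqrt (2*γ*lam) := by
      rw [hsplit, ← mul_assoc]
      exact mul_le_mul_of_nonneg_right hαγ (Real.sqrt_nonneg _)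
    constructor
    · intro i hi
      simp only [Function.mem_support] at hi
      by_contra hiA
      have hiA' : i ∉ Adag := fun h => hiA (by exact_mod_cast h)
      have hx0i : xdag i = 0 := by
        by_contra h
        exact hiA' (by exact_mod_cast hsupp' h)
      have h1 := hub i
      rw [hx0i, sub_zero] at h1
      simp only [hardThresh] at hi
      rw [if_neg (not_lt.mpr h1)] at hi
      exact hi rfl
    · intro j
      have h1 := hub j
      by_cases hc : Real.sqrt (2*lam)
          < |z j + Ψ.transpose.mulVec ((Ψ.mulVec xdag + η) - Ψ.mulVec z) j|
      · simp only [hardThresh]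
        rw [if_pos hc]
        refine le_trans h1 ?_
        linarith [h2le, Real.sqrt_nonneg (2*lam)]
      · simp only [hardThresh]
        rw [if_neg hc]
        push_neg at hc
        rw [zero_sub, abs_neg]
        calc |xdag j| ≤ |z j + Ψ.transpose.mulVec ((Ψ.mulVec xdag + η) - Ψ.mulVec z) j|
              + |z j + Ψ.transpose.mulVec ((Ψ.mulVec xdag + η) - Ψ.mulVec z) j - xdag j| := by
              have h3 : |xdag j| = |(z j + Ψ.transpose.mulVec ((Ψ.mulVec xdag + η) - Ψ.mulVec z) j)
                  - (z j + Ψ.transpose.mulVec ((Ψ.mulVec xdag + η) - Ψ.mulVec z) j - xdag j)| := by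
                congr 1; ring
              rw [h3]
              exact abs_sub _ _
          _ ≤ Real.sqrt (2*lam) + Real.sqrt (2*lam) := add_le_add hc h1
          _ = 2 * Real.sqrt (2*lam) := by ring
          _ ≤ α * Real.sqrt (2*γ*lam) := h2le
  -- iterate lemma
  have hmono : ∀ lam : ℝ, 0 ≤ lam → α * Real.sqrt (2*γ*lam) ≤ α * Real.sqrt (2*lam) := by
    intro lam h
    refine mul_le_mul_of_nonneg_left (Real.sqrt_le_sqrt ?_) hαpos.le
    nlinarith
  have iter : ∀ lam : ℝ, C₀ * ε ^ 2 ≤ lam → ∀ m : ℕ, 1 ≤ m → ∀ z : Fin p → ℝ,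
      Function.support z ⊆ (Adag : Set (Fin p)) →
      (∀ j, |z j - xdag j| ≤ α * Real.sqrt (2*lam)) →
      Function.support ((fun z : Fin p → ℝ => fun i => hardThresh lam
        (z i + Ψ.transpose.mulVec ((Ψ.mulVec xdag + η) - Ψ.mulVec z) i))^[m] z)
          ⊆ (Adag : Set (Fin p)) ∧
      ∀ j, |(fun z : Fin p → ℝ => fun i => hardThresh lam
        (z i + Ψ.transpose.mulVec ((Ψ.mulVec xdag + η) - Ψ.mulVec z) i))^[m] z j - xdag j|
          ≤ α * Real.sqrt (2*γ*lam) := by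
    intro lam hlam m
    have hlam0 : 0 ≤ lam := le_trans (by positivity) hlam
    induction m with
    | zero => omega
    | succ m ih =>
      intro _ z hz hb
      rcases Nat.eq_zero_or_pos m with rfl | hm
      · rw [Function.iterate_one]
        exact step lam hlam z hz hb
      · obtain ⟨h1, h2⟩ := ih hm z hz hb
        rw [Function.iterate_succ_apply']
        exact step lam hlam _ h1 fun j => le_trans (h2 j) (hmono lam hlam0)
  -- main induction
  intro ℓ
  induction ℓ with
  | zero =>
    intro _
    rw [hx0]
    constructor
    · simp
    · rw [zero_sub, norm_neg, pow_zero, one_mul]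
      exact hlam₀
  | succ ℓ ih =>
    intro hlam
    have hCε : 0 ≤ C₀ * ε ^ 2 := by positivity
    have hpow : γ^(ℓ+1)*lam₀ = γ*(γ^ℓ*lam₀) := by ring
    have hy0 : 0 ≤ γ^ℓ*lam₀ := by
      refine le_of_mul_le_mul_left ?_ hγ0
      rw [mul_zero, ← hpow]; linarith
    have hprev : C₀ * ε ^ 2 ≤ γ^ℓ*lam₀ := by
      have := mul_le_of_le_one_left hy0 hγlt.le
      rw [← hpow] at this
      linarith
    obtain ⟨h1, h2⟩ := ih hprev
    have h2' : ∀ j, |xseq ℓ j - xdag j| ≤ α * Real.sqrt (2*(γ^(ℓ+1)*lam₀)) := by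
      intro j
      have hb := norm_le_pi_norm (xseq ℓ - xdag) j
      rw [Real.norm_eq_abs] at hb
      simp only [Pi.sub_apply] at hb
      refine le_trans (le_trans hb h2) (le_of_eq ?_)
      congr 2
      ring
    obtain ⟨g1, g2⟩ := iter (γ^(ℓ+1)*lam₀) hlam K hK (xseq ℓ) h1 h2'
    rw [hxstep ℓ]
    refine ⟨g1, ?_⟩
    refine (pi_norm_le_iff_of_nonneg
      (mul_nonneg hαpos.le (Real.sqrt_nonneg _))).mpr fun i => ?_
    rw [Pi.sub_apply, Real.norm_eq_abs]
    exact g2 i
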